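/- Let f : ℝ → ℝ be C¹, increasing, convex with f(0) = 1. Suppose a measurable function u : Ω → [0,∞) on a finite measure space (Ω, μ) with weight 0 < g ∈ L^∞ satisfies ∫ g f(u) H(u) dμ ≤ ∫ g f(u) f'(u) dμ < ∞, where H(t) = ∫₀ᵗ f''(τ)(f(τ)−1)dτ, and suppose there exists T > 0 with (f(T) − 1) ≥ 2, i.e. H(t) ≥ 2(f'(t) − f'(T)) for t ≥ T. Then ∫ g f(u) f'(u) dμ ≤ 2 ∫_{{u < T}} g f(u) f'(u) dμ + 2 f'(T) ∫ g f(u) dμ. -/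

import Mathlib

open MeasureTheory

lemma mono_deriv_nonneg' {h : ℝ → ℝ} (hm : Monotone h) (τ : ℝ)
    (hd : DifferentiableAt ℝ h τ) : 0 ≤ deriv h τ := by
  have h1 : Filter.Tendsto (slope h τ) (nhdsWithin τ {τ}ᶜ) (nhds (deriv h τ)) :=
    hasDerivAt_iff_tendsto_slope.mp hd.hasDerivAt
  have h2 : Filter.Tendsto (slope h τ) (nhdsWithin τ (Set.Ioi τ)) (nhds (deriv h τ)) :=
    h1.mono_left (nhdsWithin_mono _ fun y hy => ne_of_gt hy)
  refine ge_of_tendsto h2 ?_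
  filter_upwards [self_mem_nhdsWithin] with y hy
  rw [slope_def_field]
  exact div_nonneg (sub_nonneg.2 (hm (le_of_lt hy))) (sub_nonneg.2 (le_of_lt hy))

theorem stmt_16 {Ω : Type*} [MeasurableSpace Ω] (μ : Measure Ω)
    [IsFiniteMeasure μ]
    (g u : Ω → ℝ) (hg : Measurable g) (hgpos : ∀ x, 0 < g x)
    (hgbdd : ∃ M, ∀ x, g x ≤ M)
    (hu : Measurable u) (hupos : ∀ x, 0 ≤ u x)
    (f : ℝ → ℝ) (hf : ContDiff ℝ 2 f) (hmono : Monotone f)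
    (hconv : ConvexOn ℝ Set.univ f) (hf0 : f 0 = 1)
    (H : ℝ → ℝ)
    (hH : ∀ t, H t = ∫ τ in (0:ℝ)..t, deriv (deriv f) τ * (f τ - 1))
    (T : ℝ) (hT : 0 < T) (hT2 : 2 ≤ f T - 1)
    (hHge : ∀ t ≥ T, H t ≥ 2 * (deriv f t - deriv f T))
    (hint1 : Integrable (fun x => g x * f (u x) * deriv f (u x)) μ)
    (hint2 : Integrable (fun x => g x * f (u x) * H (u x)) μ)
    (hint3 : Integrable (fun x => g x * f (u x)) μ)
    (hmain : ∫ x, g x * f (u x) * H (u x) ∂μ ≤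
             ∫ x, g x * f (u x) * deriv f (u x) ∂μ) :
    ∫ x, g x * f (u x) * deriv f (u x) ∂μ ≤
      2 * (∫ x in {x | u x < T}, g x * f (u x) * deriv f (u x) ∂μ) +
      2 * deriv f T * ∫ x, g x * f (u x) ∂μ := by
  have hfd : Differentiable ℝ f := hf.differentiable two_ne_zero
  have hfd2 : Differentiable ℝ (deriv f) := by
    have h2 : ContDiff ℝ (1 + 1) f := by rw [one_add_one_eq_two]; exact hf
    exact ((contDiff_succ_iff_deriv.mp h2).2.2).differentiable one_ne_zero
  -- deriv f is monotone (convexity)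
  have hderivmono : Monotone (deriv f) := by
    have := hconv.monotoneOn_deriv (fun x _ => hfd.differentiableAt)
    exact monotoneOn_univ.mp this
  -- deriv f nonneg
  have hderivnn : ∀ t, 0 ≤ deriv f t := fun t =>
    mono_deriv_nonneg' hmono t hfd.differentiableAt
  -- second derivative nonneg
  have hd2nn : ∀ t, 0 ≤ deriv (deriv f) t := fun t =>
    mono_deriv_nonneg' hderivmono t hfd2.differentiableAt
  -- f t ≥ 1 for t ≥ 0
  have hfge1 : ∀ t, 0 ≤ t → 1 ≤ f t := fun t ht => hf0 ▸ hmono ht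
  -- H nonneg on [0, ∞)
  have hHnn : ∀ t, 0 ≤ t → 0 ≤ H t := by
    intro t ht
    rw [hH t]
    apply intervalIntegral.integral_nonneg ht
    intro τ hτ
    exact mul_nonneg (hd2nn τ) (sub_nonneg.2 (hfge1 τ hτ.1))
  -- pointwise nonnegativity
  have hgfnn : ∀ x, 0 ≤ g x * f (u x) :=
    fun x => mul_nonneg (hgpos x).le (le_trans zero_le_one (hfge1 _ (hupos x)))
  have hgfHnn : ∀ x, 0 ≤ g x * f (u x) * H (u x) :=
    fun x => mul_nonneg (hgfnn x) (hHnn _ (hupos x))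
  set A : Set Ω := {x | u x < T} with hA
  have hAm : MeasurableSet A := measurableSet_lt hu measurable_const
  set I := ∫ x, g x * f (u x) * deriv f (u x) ∂μ with hI
  -- split I
  have hsplit : I = (∫ x in A, g x * f (u x) * deriv f (u x) ∂μ)
      + ∫ x in Aᶜ, g x * f (u x) * deriv f (u x) ∂μ := by
    rw [hI, ← integral_add_compl hAm hint1]
  -- bound on Aᶜ
  have hbound : ∫ x in Aᶜ, g x * f (u x) * deriv f (u x) ∂μ ≤
      ∫ x in Aᶜ, ((1/2) * (g x * f (u x) * H (u x)) + deriv f T * (g x * f (u x))) ∂μ := by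
    apply setIntegral_mono_on (hint1.integrableOn)
    · exact ((hint2.integrableOn.const_mul _).add (hint3.integrableOn.const_mul _))
    · exact hAm.compl
    · intro x hx
      have hxT : T ≤ u x := not_lt.mp hx
      have hHx := hHge (u x) hxT
      have hfpos : 0 ≤ g x * f (u x) := hgfnn x
      nlinarith [hfpos, hHx]
  have heq : ∫ x in Aᶜ, ((1/2) * (g x * f (u x) * H (u x)) + deriv f T * (g x * f (u x))) ∂μ
      = (1/2) * (∫ x in Aᶜ, g x * f (u x) * H (u x) ∂μ)
        + deriv f T * ∫ x in Aᶜ, g x * f (u x) ∂μ := by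
    rw [integral_add ((hint2.integrableOn.const_mul _)) ((hint3.integrableOn.const_mul _)),
      integral_const_mul, integral_const_mul]
  -- set integrals bounded by full integrals
  have h3 : ∫ x in Aᶜ, g x * f (u x) * H (u x) ∂μ ≤ ∫ x, g x * f (u x) * H (u x) ∂μ := by
    apply setIntegral_le_integral hint2
    filter_upwards with x using hgfHnn x
  have h4 : ∫ x in Aᶜ, g x * f (u x) ∂μ ≤ ∫ x, g x * f (u x) ∂μ := by
    apply setIntegral_le_integral hint3
    filter_upwards with x using hgfnn x
  have hfT : 0 ≤ deriv f T := hderivnn T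
  nlinarith [mul_le_mul_of_nonneg_left h4 hfT, hsplit, hbound, heq, h3, hmain]
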